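/- The Schouten–Jacobi bracket [[X,Y]]^Φ = [[X,Y]] + xX∧i_Φ Y - (-1)^x y i_Φ X∧Y associated with a Lie algebroid E and 1-cocycle Φ is a graded Lie bracket on A(E): it is graded antisymmetric ([[X,Y]]^Φ = -(-1)^{xy}[[Y,X]]^Φ) and satisfies the graded Jacobi identity [[[[X,Y]]^Φ, Z]]^Φ = [[X,[[Y,Z]]^Φ]]^Φ - (-1)^{xy}[[Y,[[X,Z]]^Φ]]^Φ. -/
import Mathlib


/-- Abstract model of the graded commutative algebra `A(E)` of multivector fields /
multisections of a Lie algebroid, equipped with the wedge product and the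
Schouten–Nijenhuis bracket (sign convention: graded Lie bracket for the degree
shifted by one).  `H p X` means `X` is homogeneous of (multivector) degree `p`. -/
structure SchoutenAlgebra (V : Type*) [AddCommGroup V] [Module ℝ V] where
  wedge : V →ₗ[ℝ] V →ₗ[ℝ] V
  bracket : V →ₗ[ℝ] V →ₗ[ℝ] V
  H : ℤ → V → Prop
  one : V
  h_one : H 0 one
  wedge_one : ∀ X : V, wedge one X = X
  wedge_assoc : ∀ X Y Z : V, wedge (wedge X Y) Z = wedge X (wedge Y Z)
  wedge_comm : ∀ {p q : ℤ} {X Y : V}, H p X → H q Y →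
    wedge X Y = (Int.negOnePow (p * q) : ℤ) • wedge Y X
  wedge_mem : ∀ {p q : ℤ} {X Y : V}, H p X → H q Y → H (p + q) (wedge X Y)
  bracket_mem : ∀ {p q : ℤ} {X Y : V}, H p X → H q Y → H (p + q - 1) (bracket X Y)
  bracket_antisymm : ∀ {p q : ℤ} {X Y : V}, H p X → H q Y →
    bracket X Y = -((Int.negOnePow ((p - 1) * (q - 1)) : ℤ) • bracket Y X)
  bracket_jacobi : ∀ {p q : ℤ} {X Y : V}, H p X → H q Y → ∀ Z : V,
    bracket (bracket X Y) Z =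
      bracket X (bracket Y Z) -
        (Int.negOnePow ((p - 1) * (q - 1)) : ℤ) • bracket Y (bracket X Z)
  bracket_leibniz : ∀ {p q : ℤ} {X Y : V}, H p X → H q Y → ∀ Z : V,
    bracket X (wedge Y Z) =
      wedge (bracket X Y) Z + (Int.negOnePow ((p - 1) * q) : ℤ) • wedge Y (bracket X Z)

/-- The Schouten–Jacobi bracket `[[X,Y]]^Φ = [[X,Y]] + x X∧i_Φ Y - (-1)^x y i_Φ X∧Y`
associated with a Lie algebroid and a 1-cocycle `Φ` (contraction `iφ`), for `X`
of multivector degree `p` (shifted degree `x = p-1`) and `Y` of degree `q`. -/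
def brPhi {V : Type*} [AddCommGroup V] [Module ℝ V] (S : SchoutenAlgebra V)
    (iφ : V →ₗ[ℝ] V) (p q : ℤ) (X Y : V) : V :=
  S.bracket X Y + (p - 1) • S.wedge X (iφ Y)
    - ((Int.negOnePow (p - 1) : ℤ) * (q - 1)) • S.wedge (iφ X) Y

lemma eps_mul (s t : ℤ) : (Int.negOnePow s : ℤ) * Int.negOnePow t = Int.negOnePow (s + t) := by
  rw [Int.negOnePow_add]; push_cast; ring

lemma eps_congr {s t : ℤ} (h : Even (s - t)) : (Int.negOnePow s : ℤ) = Int.negOnePow t :=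
  congrArg _ ((Int.negOnePow_eq_iff _ _).2 h)

lemma eps_one {s : ℤ} (h : Even s) : (Int.negOnePow s : ℤ) = 1 := by
  rw [Int.negOnePow_even _ h, Units.val_one]

lemma eps_sq (s : ℤ) : (Int.negOnePow s : ℤ) ^ 2 = 1 := by
  rw [sq, eps_mul]; exact eps_one ⟨s, rfl⟩

lemma SchoutenAlgebra.bracket_leibniz_right {V : Type*} [AddCommGroup V] [Module ℝ V]
    (S : SchoutenAlgebra V) {p q r : ℤ} {X Y Z : V}
    (hX : S.H p X) (hY : S.H q Y) (hZ : S.H r Z) :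
    S.bracket (S.wedge X Y) Z = S.wedge X (S.bracket Y Z) +
      (Int.negOnePow (q * (r - 1)) : ℤ) • S.wedge (S.bracket X Z) Y := by
  rw [S.bracket_antisymm (S.wedge_mem hX hY) hZ, S.bracket_leibniz hZ hX Y,
    S.bracket_antisymm hZ hX, S.bracket_antisymm hZ hY]
  simp only [map_add, map_sub, map_neg, map_zsmul, map_zero, LinearMap.add_apply,
    LinearMap.sub_apply, LinearMap.neg_apply, LinearMap.smul_apply, LinearMap.zero_apply,
    smul_add, smul_sub, smul_neg, smul_zero, smul_smul]
  match_scalars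
  · simp only [neg_neg, mul_one, eps_mul]
    exact eps_congr ⟨(r - 1) * (p - 1), by ring⟩
  · simp only [neg_neg, mul_one, eps_mul]
    exact eps_one ⟨(r - 1) * (p + q - 1), by ring⟩

lemma eps_one_val : (Int.negOnePow 1 : ℤ) = -1 := by
  rw [Int.negOnePow_one]; rfl

lemma eps_pow3 (s : ℤ) : (Int.negOnePow s : ℤ) ^ 3 = (Int.negOnePow s : ℤ) := by
  rw [pow_succ, eps_sq, one_mul]

lemma eps_pow4 (s : ℤ) : (Int.negOnePow s : ℤ) ^ 4 = 1 := by
  rw [pow_succ, eps_pow3, eps_mul]; exact eps_one ⟨s, rfl⟩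

/-- The Schouten–Jacobi bracket `[[·,·]]^Φ` associated with a Lie
algebroid `E` and a 1-cocycle `Φ` (`dΦ = 0`, expressed through the hypotheses
on the contraction `iφ`) is a graded Lie bracket on `A(E)` for the shifted
degrees `x = |X|-1`:  it is graded antisymmetric and satisfies the graded
Jacobi identity. -/
theorem schouten_jacobi_graded_lie {V : Type*} [AddCommGroup V] [Module ℝ V]
    (S : SchoutenAlgebra V) (iφ : V →ₗ[ℝ] V)
    (hiφ_mem : ∀ {p : ℤ} {X : V}, S.H p X → S.H (p - 1) (iφ X))
    (hiφ_der : ∀ {p : ℤ} {X : V}, S.H p X → ∀ Y : V,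
      iφ (S.wedge X Y) = S.wedge (iφ X) Y + (Int.negOnePow p : ℤ) • S.wedge X (iφ Y))
    (hiφ2 : ∀ X : V, iφ (iφ X) = 0)
    (hcocycle : ∀ {p : ℤ} {X : V}, S.H p X → ∀ Y : V,
      iφ (S.bracket X Y) =
        S.bracket (iφ X) Y + (Int.negOnePow (p - 1) : ℤ) • S.bracket X (iφ Y))
    {p q r : ℤ} (X Y Z : V) (hX : S.H p X) (hY : S.H q Y) (hZ : S.H r Z) :
    brPhi S iφ p q X Y =
        -((Int.negOnePow ((p - 1) * (q - 1)) : ℤ) • brPhi S iφ q p Y X) ∧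
      brPhi S iφ (p + q - 1) r (brPhi S iφ p q X Y) Z =
        brPhi S iφ p (q + r - 1) X (brPhi S iφ q r Y Z)
          - (Int.negOnePow ((p - 1) * (q - 1)) : ℤ) •
              brPhi S iφ q (p + r - 1) Y (brPhi S iφ p r X Z) := by
  have cv1 : ((Int.negOnePow ((p + (q - 1) - 1) * r)) : ℤ) = (Int.negOnePow (p * r) : ℤ) * (Int.negOnePow (q * r) : ℤ) := by
    simp only [eps_mul]; exact eps_congr ⟨-r, by ring⟩
  have cv2 : ((Int.negOnePow ((p + q - 1) * (r - 1))) : ℤ) = (Int.negOnePow (1) : ℤ) * (Int.negOnePow (p) : ℤ) * (Int.negOnePow (q) : ℤ) * (Int.negOnePow (r) : ℤ) * (Int.negOnePow (p * r) : ℤ) * (Int.negOnePow (q * r) : ℤ) := by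
    simp only [eps_mul]; exact eps_congr ⟨-p - q - r, by ring⟩
  have cv3 : ((Int.negOnePow ((p - 1 + q - 1) * r)) : ℤ) = (Int.negOnePow (p * r) : ℤ) * (Int.negOnePow (q * r) : ℤ) := by
    simp only [eps_mul]; exact eps_congr ⟨-r, by ring⟩
  have cv4 : ((Int.negOnePow ((p - 1) * (q - 1))) : ℤ) = (Int.negOnePow (1) : ℤ) * (Int.negOnePow (p) : ℤ) * (Int.negOnePow (q) : ℤ) * (Int.negOnePow (p * q) : ℤ) := by
    simp only [eps_mul]; exact eps_congr ⟨-p - q, by ring⟩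
  have cv5 : ((Int.negOnePow ((p - 1) * (q - 1) + (q - 1) * (p - 1))) : ℤ) = 1 := eps_one ⟨1 - p + p*q - q, by ring⟩
  have cv6 : ((Int.negOnePow ((p - 1) * q)) : ℤ) = (Int.negOnePow (q) : ℤ) * (Int.negOnePow (p * q) : ℤ) := by
    simp only [eps_mul]; exact eps_congr ⟨-q, by ring⟩
  have cv7 : ((Int.negOnePow ((q - 1) * (p + (r - 1)) + (r - 1) * (q - 1))) : ℤ) = (Int.negOnePow (p) : ℤ) * (Int.negOnePow (p * q) : ℤ) := by
    simp only [eps_mul]; exact eps_congr ⟨1 - p - q + q*r - r, by ring⟩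
  have cv8 : ((Int.negOnePow ((q - 1) * (p - 1 + r) + r * (q - 1))) : ℤ) = (Int.negOnePow (1) : ℤ) * (Int.negOnePow (p) : ℤ) * (Int.negOnePow (q) : ℤ) * (Int.negOnePow (p * q) : ℤ) := by
    simp only [eps_mul]; exact eps_congr ⟨-p - q + q*r - r, by ring⟩
  have cv9 : ((Int.negOnePow ((q - 1) * (p - 1 - 1) + (p - 1 + q - 1) * r)) : ℤ) = (Int.negOnePow (p) : ℤ) * (Int.negOnePow (p * q) : ℤ) * (Int.negOnePow (p * r) : ℤ) * (Int.negOnePow (q * r) : ℤ) := by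
    simp only [eps_mul]; exact eps_congr ⟨1 - p - q - r, by ring⟩
  have cv10 : ((Int.negOnePow ((q - 1) * (p - 1))) : ℤ) = (Int.negOnePow (1) : ℤ) * (Int.negOnePow (p) : ℤ) * (Int.negOnePow (q) : ℤ) * (Int.negOnePow (p * q) : ℤ) := by
    simp only [eps_mul]; exact eps_congr ⟨-p - q, by ring⟩
  have cv11 : ((Int.negOnePow ((q - 1) * (p - 1) + (p + q - 1) * (r - 1))) : ℤ) = (Int.negOnePow (r) : ℤ) * (Int.negOnePow (p * q) : ℤ) * (Int.negOnePow (p * r) : ℤ) * (Int.negOnePow (q * r) : ℤ) := by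
    simp only [eps_mul]; exact eps_congr ⟨1 - p - q - r, by ring⟩
  have cv12 : ((Int.negOnePow ((q - 1) * (r - 1) + (p + r - 1) * (q - 1))) : ℤ) = (Int.negOnePow (p) : ℤ) * (Int.negOnePow (p * q) : ℤ) := by
    simp only [eps_mul]; exact eps_congr ⟨1 - p - q + q*r - r, by ring⟩
  have cv13 : ((Int.negOnePow ((q - 1) * p)) : ℤ) = (Int.negOnePow (p) : ℤ) * (Int.negOnePow (p * q) : ℤ) := by
    simp only [eps_mul]; exact eps_congr ⟨-p, by ring⟩
  have cv14 : ((Int.negOnePow (p + q - 1 - 1)) : ℤ) = (Int.negOnePow (p) : ℤ) * (Int.negOnePow (q) : ℤ) := by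
    simp only [eps_mul]; exact eps_congr ⟨-1, by ring⟩
  have cv15 : ((Int.negOnePow (p - 1)) : ℤ) = (Int.negOnePow (1) : ℤ) * (Int.negOnePow (p) : ℤ) := by
    simp only [eps_mul]; exact eps_congr ⟨-1, by ring⟩
  have cv16 : ((Int.negOnePow (p - 1 + (p + (q - 1) - 1) * r)) : ℤ) = (Int.negOnePow (1) : ℤ) * (Int.negOnePow (p) : ℤ) * (Int.negOnePow (p * r) : ℤ) * (Int.negOnePow (q * r) : ℤ) := by
    simp only [eps_mul]; exact eps_congr ⟨-1 - r, by ring⟩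
  have cv17 : ((Int.negOnePow (q * (p - 1 + (r - 1)) + (r - 1) * q)) : ℤ) = (Int.negOnePow (q) : ℤ) * (Int.negOnePow (p * q) : ℤ) := by
    simp only [eps_mul]; exact eps_congr ⟨-2*q + q*r, by ring⟩
  have cv18 : ((Int.negOnePow (q * (p - 1))) : ℤ) = (Int.negOnePow (q) : ℤ) * (Int.negOnePow (p * q) : ℤ) := by
    simp only [eps_mul]; exact eps_congr ⟨-q, by ring⟩
  have cv19 : ((Int.negOnePow (q * (r - 1) + (p - 1 + r - 1) * q)) : ℤ) = (Int.negOnePow (q) : ℤ) * (Int.negOnePow (p * q) : ℤ) := by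
    simp only [eps_mul]; exact eps_congr ⟨-2*q + q*r, by ring⟩
  have cv20 : ((Int.negOnePow (q - 1)) : ℤ) = (Int.negOnePow (1) : ℤ) * (Int.negOnePow (q) : ℤ) := by
    simp only [eps_mul]; exact eps_congr ⟨-1, by ring⟩
-- CONVS: cv1, cv2, cv3, cv4, cv5, cv6, cv7, cv8, cv9, cv10, cv11, cv12, cv13, cv14, cv15, cv16, cv17, cv18, cv19, cv20
  constructor
  · simp only [brPhi, S.bracket_antisymm hY hX, S.wedge_comm hY (hiφ_mem hX),
      S.wedge_comm (hiφ_mem hY) hX,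
      map_add, map_sub, map_neg, map_zsmul, map_zero, LinearMap.add_apply,
      LinearMap.sub_apply, LinearMap.neg_apply, LinearMap.smul_apply, LinearMap.zero_apply,
      smul_add, smul_sub, smul_neg, smul_zero, smul_smul]
    match_scalars
    all_goals (simp only [neg_neg, one_mul, mul_one, neg_mul, mul_neg, eps_mul]; try ring1)
    all_goals simp only [cv1, cv2, cv3, cv4, cv5, cv6, cv7, cv8, cv9, cv10, cv11, cv12, cv13, cv14, cv15, cv16, cv17, cv18, cv19, cv20]
    all_goals ring_nf
    all_goals simp only [eps_sq, eps_pow3, eps_pow4, eps_one_val, one_mul, mul_one]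
    all_goals try ring1
  · simp only [brPhi,
      S.bracket_jacobi hX hY Z,
      S.bracket_leibniz_right hX (hiφ_mem hY) hZ,
      S.bracket_leibniz_right (hiφ_mem hX) hY hZ,
      S.bracket_leibniz hX hY (iφ Z),
      S.bracket_leibniz hX (hiφ_mem hY) Z,
      S.bracket_leibniz hY hX (iφ Z),
      S.bracket_leibniz hY (hiφ_mem hX) Z,
      S.bracket_antisymm hY hX,
      S.bracket_antisymm hY (hiφ_mem hX),
      hcocycle hX Y, hcocycle hY Z, hcocycle hX Z,
      hiφ_der hX (iφ Y), hiφ_der (hiφ_mem hX) Y,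
      hiφ_der hY (iφ Z), hiφ_der (hiφ_mem hY) Z,
      hiφ_der hX (iφ Z), hiφ_der (hiφ_mem hX) Z,
      hiφ2 X, hiφ2 Y, hiφ2 Z,
      S.wedge_assoc,
      S.wedge_comm (S.bracket_mem hX hZ) (hiφ_mem hY),
      S.wedge_comm (S.bracket_mem (hiφ_mem hX) hZ) hY,
      S.wedge_comm (S.bracket_mem hX hY) (hiφ_mem hZ),
      S.wedge_comm (S.bracket_mem (hiφ_mem hX) hY) hZ,
      S.wedge_comm (S.bracket_mem hX (hiφ_mem hY)) hZ,
      S.wedge_comm hY (S.wedge_mem (hiφ_mem hX) (hiφ_mem hZ)),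
      S.wedge_comm (hiφ_mem hZ) hY,
      S.wedge_comm (hiφ_mem hY) (S.wedge_mem hX (hiφ_mem hZ)),
      S.wedge_comm (hiφ_mem hZ) (hiφ_mem hY),
      S.wedge_comm (hiφ_mem hY) (S.wedge_mem (hiφ_mem hX) hZ),
      S.wedge_comm hZ (hiφ_mem hY),
      map_add, map_sub, map_neg, map_zsmul, map_zero, LinearMap.add_apply,
      LinearMap.sub_apply, LinearMap.neg_apply, LinearMap.smul_apply, LinearMap.zero_apply,
      smul_add, smul_sub, smul_neg, smul_zero, smul_smul]
    match_scalars
    all_goals (simp only [neg_neg, one_mul, mul_one, neg_mul, mul_neg, eps_mul]; try ring1)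
    all_goals simp only [cv1, cv2, cv3, cv4, cv5, cv6, cv7, cv8, cv9, cv10, cv11, cv12, cv13, cv14, cv15, cv16, cv17, cv18, cv19, cv20]
    all_goals ring_nf
    all_goals simp only [eps_sq, eps_pow3, eps_pow4, eps_one_val, one_mul, mul_one]
    all_goals try ring1
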